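/- Let T > 0, let (Ω, F, P) be a probability space carrying a standard Brownian motion W : [0,T] × Ω → ℝ with continuous sample paths, and for each N ∈ ℕ (N ≥ 1) define the Euler approximation Y^N_0 := 0 and Y^N_{k+1} := Y^N_k − (T/N)·(Y^N_k)³ + (W_{(k+1)T/N} − W_{kT/N}) for k = 0, 1, …, N−1. Then for every p ∈ [1, ∞), lim_{N → ∞} E[|Y^N_N|^p] = ∞. -/

import Mathlib

open MeasureTheory ProbabilityTheory Filter
open scoped NNReal ENNReal

/-- Lower bound for Gaussian measure of an interval `[a,b]` with `0 ≤ a`. -/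
lemma my_gauss_icc_lb (v : ℝ≥0) (hv : v ≠ 0) (a b : ℝ) (ha : 0 ≤ a) (hab : a ≤ b) :
    ENNReal.ofReal ((b - a) * gaussianPDFReal 0 v b) ≤ gaussianReal 0 v (Set.Icc a b) := by
  rw [gaussianReal_apply _ hv]
  have h1 : ∫⁻ x in Set.Icc a b, ENNReal.ofReal (gaussianPDFReal 0 v b) ∂(volume)
      = ENNReal.ofReal (gaussianPDFReal 0 v b) * ENNReal.ofReal (b - a) := by
    rw [setLIntegral_const, Real.volume_Icc]
  have h2 : ∫⁻ x in Set.Icc a b, ENNReal.ofReal (gaussianPDFReal 0 v b) ∂(volume)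
      ≤ ∫⁻ x in Set.Icc a b, gaussianPDF 0 v x ∂(volume) := by
    refine setLIntegral_mono (measurable_gaussianPDF 0 v) fun x hx => ?_
    refine ENNReal.ofReal_le_ofReal ?_
    unfold gaussianPDFReal
    have hxb : x ^ 2 ≤ b ^ 2 := by
      have h0 : 0 ≤ x := ha.trans hx.1
      nlinarith [hx.2]
    have hv' : (0:ℝ) < v := NNReal.coe_pos.mpr (pos_iff_ne_zero.mpr hv)
    have hexp : Real.exp (-(b - 0) ^ 2 / (2 * ↑v)) ≤ Real.exp (-(x - 0) ^ 2 / (2 * ↑v)) := by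
      apply Real.exp_le_exp.mpr
      exact div_le_div_of_nonneg_right (by nlinarith) (by linarith)
    gcongr
  calc ENNReal.ofReal ((b - a) * gaussianPDFReal 0 v b)
      ≤ ENNReal.ofReal (gaussianPDFReal 0 v b) * ENNReal.ofReal (b - a) := by
        rw [← ENNReal.ofReal_mul (gaussianPDFReal_nonneg 0 v b), mul_comm]
    _ ≤ _ := h1 ▸ h2

lemma my_pdf_lb (v : ℝ≥0) (c : ℝ) (hvc : (v:ℝ) ≤ c) (hv : (0:ℝ) < v) (b : ℝ) :
    (Real.sqrt (2 * Real.pi * c))⁻¹ * Real.exp (-b ^ 2 / (2 * v)) ≤ gaussianPDFReal 0 v b := by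
  unfold gaussianPDFReal
  have h2 : (0:ℝ) < Real.sqrt (2 * Real.pi * v) := Real.sqrt_pos.mpr (by positivity)
  have h1 : (Real.sqrt (2 * Real.pi * c))⁻¹ ≤ (Real.sqrt (2 * Real.pi * v))⁻¹ := by
    apply inv_anti₀ h2
    exact Real.sqrt_le_sqrt (by nlinarith [Real.pi_pos])
  have hb : b - 0 = b := sub_zero b
  rw [hb]
  exact mul_le_mul_of_nonneg_right h1 (Real.exp_pos _).le

lemma my_growth {h r y d : ℝ} (hr1 : 1 ≤ r) (hhr : 3 ≤ h * r) (hy : r ≤ |y|) (hd : |d| ≤ 1) :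
    |y| ^ 2 ≤ |y - h * y ^ 3 + d| := by
  have h0 : 0 < h := by nlinarith
  have hy1 : 1 ≤ |y| := hr1.trans hy
  have e1 : h * y ^ 3 - y = -(y - h * y ^ 3 + d) + d := by ring
  have t1 : |h * y ^ 3 - y| ≤ |y - h * y ^ 3 + d| + |d| := by
    rw [e1]
    calc |-(y - h * y ^ 3 + d) + d| ≤ |-(y - h * y ^ 3 + d)| + |d| := abs_add_le _ _
      _ = |y - h * y ^ 3 + d| + |d| := by rw [abs_neg]
  have t2 : |h * y ^ 3| - |y| ≤ |h * y ^ 3 - y| := abs_sub_abs_le_abs_sub _ _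
  have t3 : |h * y ^ 3| = h * |y| ^ 3 := by
    rw [abs_mul, abs_of_pos h0, abs_pow]
  have t4 : h * r * |y| ^ 2 ≤ h * |y| * |y| ^ 2 := by
    have : h * r ≤ h * |y| := mul_le_mul_of_nonneg_left hy h0.le
    exact mul_le_mul_of_nonneg_right this (by positivity)
  nlinarith [sq_nonneg (|y| - 1)]

lemma my_tendsto (K : ℝ) :
    Filter.Tendsto (fun N : ℕ => ((2:ℝ) ^ (2 ^ (N - 1) : ℕ))
      * Real.exp (-(K * (N:ℝ) ^ 4))) Filter.atTop Filter.atTop := by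
  have hlog : (0:ℝ) < Real.log 2 := Real.log_pos one_lt_two
  have hK1 : (0:ℝ) < |K| + 1 := by positivity
  set ε : ℝ := Real.log 2 / (4 * (|K| + 1)) with hε
  have hεpos : 0 < ε := by positivity
  have h0 : Filter.Tendsto (fun n : ℕ => (n:ℝ) ^ 4 * (1/2 : ℝ) ^ n)
      Filter.atTop (nhds 0) :=
    tendsto_pow_const_mul_const_pow_of_lt_one 4 (by norm_num) (by norm_num)
  have hev : ∀ᶠ n : ℕ in Filter.atTop, (n:ℝ) ^ 4 * (1/2 : ℝ) ^ n ≤ ε := by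
    filter_upwards [h0.eventually (ge_mem_nhds hεpos)] with n hn using hn
  -- rewrite the goal via exp form
  have key : ∀ᶠ n : ℕ in Filter.atTop,
      Real.log 2 / 4 * (n:ℝ) ≤ ((2:ℝ) ^ (2 ^ (n - 1) : ℕ)) * Real.exp (-(K * (n:ℝ) ^ 4)) := by
    filter_upwards [hev, Filter.eventually_ge_atTop 1] with n hn hn1
    have hpow : ((2:ℝ) ^ (2 ^ (n - 1) : ℕ)) = Real.exp ((2 ^ (n - 1) : ℕ) * Real.log 2) := by
      rw [Real.exp_nat_mul, Real.exp_log two_pos]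
    rw [hpow, ← Real.exp_add]
    have hn4 : K * (n:ℝ) ^ 4 ≤ (Real.log 2 / 4) * (2:ℝ) ^ n := by
      have h1 : (n:ℝ) ^ 4 ≤ ε * 2 ^ n := by
        have h2 : (0:ℝ) < (2:ℝ) ^ n := by positivity
        have := hn
        rw [div_pow, one_pow] at this
        calc (n:ℝ) ^ 4 = (n:ℝ) ^ 4 * (1 / 2 ^ n) * 2 ^ n := by field_simp
          _ ≤ ε * 2 ^ n := by
              apply mul_le_mul_of_nonneg_right _ h2.le
              exact this
      calc K * (n:ℝ) ^ 4 ≤ (|K| + 1) * (n:ℝ) ^ 4 := by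
            apply mul_le_mul_of_nonneg_right _ (by positivity)
            nlinarith [abs_nonneg K, le_abs_self K]
        _ ≤ (|K| + 1) * (ε * 2 ^ n) := by
            exact mul_le_mul_of_nonneg_left h1 hK1.le
        _ = (Real.log 2 / 4) * (2:ℝ) ^ n := by
            rw [hε]; field_simp
    have h2n : ((2:ℝ) ^ n) = 2 * (2:ℝ) ^ (n - 1) := by
      conv_lhs => rw [show n = (n - 1) + 1 from (Nat.succ_pred_eq_of_pos hn1).symm]
      ring
    have hcast : ((2 ^ (n - 1) : ℕ) : ℝ) = (2:ℝ) ^ (n - 1) := by push_cast; ring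
    have hnle : (n:ℝ) ≤ (2:ℝ) ^ n := by
      exact_mod_cast (Nat.lt_two_pow_self (n := n)).le
    have hfin : Real.log 2 / 4 * (n:ℝ) ≤ (2 ^ (n - 1) : ℕ) * Real.log 2 + -(K * (n:ℝ) ^ 4) := by
      rw [hcast]
      nlinarith [hn4, hnle, h2n]
    calc Real.log 2 / 4 * (n:ℝ) ≤ Real.exp (Real.log 2 / 4 * (n:ℝ)) - 1 + 1 := by
          nlinarith [Real.add_one_le_exp (Real.log 2 / 4 * (n:ℝ))]
      _ = Real.exp (Real.log 2 / 4 * (n:ℝ)) := by ring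
      _ ≤ Real.exp ((2 ^ (n - 1) : ℕ) * Real.log 2 + -(K * (n:ℝ) ^ 4)) :=
          Real.exp_le_exp.mpr hfin
  have hmul : Filter.Tendsto (fun n : ℕ => Real.log 2 / 4 * (n:ℝ)) Filter.atTop Filter.atTop :=
    Filter.Tendsto.const_mul_atTop (by positivity) tendsto_natCast_atTop_atTop
  exact Filter.tendsto_atTop_mono' _ key hmul

/-- `W` is a standard Brownian motion on the time interval `[0, T]` with
continuous sample paths: each `W t` is measurable, `W 0 = 0`, the sample paths
are continuous on `[0, T]`, the increment `W t - W s` is centered Gaussian with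
variance `t - s` for `0 ≤ s ≤ t ≤ T`, and increments over disjoint consecutive
time intervals are independent. -/
def IsStandardBrownianMotion {Ω : Type*} [MeasurableSpace Ω] (P : Measure Ω)
    (T : ℝ) (W : ℝ → Ω → ℝ) : Prop :=
  (∀ t, t ∈ Set.Icc 0 T → Measurable (W t)) ∧
  (∀ ω, W 0 ω = 0) ∧
  (∀ ω, ContinuousOn (fun t => W t ω) (Set.Icc 0 T)) ∧
  (∀ s t : ℝ, 0 ≤ s → s ≤ t → t ≤ T →
    Measure.map (fun ω => W t ω - W s ω) P = gaussianReal 0 (Real.toNNReal (t - s))) ∧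
  (∀ (n : ℕ) (t : Fin (n + 1) → ℝ), Monotone t → (∀ i, t i ∈ Set.Icc 0 T) →
    iIndepFun
      (fun (i : Fin n) => fun ω => W (t i.succ) ω - W (t i.castSucc) ω) P)

set_option maxHeartbeats 1000000 in
theorem stmt_6 {Ω : Type*} [MeasureSpace Ω] [IsProbabilityMeasure (ℙ : Measure Ω)]
    (T : ℝ) (hT : 0 < T)
    (W : ℝ → Ω → ℝ) (hW : IsStandardBrownianMotion ℙ T W)
    (Y : ℕ → ℕ → Ω → ℝ)
    (hY0 : ∀ N, 1 ≤ N → ∀ ω, Y N 0 ω = 0)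
    (hYrec : ∀ N, 1 ≤ N → ∀ k < N, ∀ ω,
      Y N (k + 1) ω = Y N k ω - (T / N) * (Y N k ω) ^ 3
        + (W (((k : ℝ) + 1) * T / N) ω - W ((k : ℝ) * T / N) ω)) :
    ∀ p : ℝ, 1 ≤ p →
      Tendsto (fun N : ℕ => ∫⁻ ω, ENNReal.ofReal (|Y N N ω| ^ p) ∂ℙ) atTop (nhds ⊤) := by
  intro p hp
  obtain ⟨hWmeas, hW0, -, hWgauss, hWindep⟩ := hW
  set C : ℝ := (Real.sqrt (2 * Real.pi * T))⁻¹ with hC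
  have hCpos : 0 < C := by positivity
  clear_value C
  set K : ℝ := |Real.log C| + (3 / T + 3) ^ 2 / (2 * T) with hKdef
  clear_value K
  have main : ∀ N : ℕ, 1 ≤ N →
      ENNReal.ofReal (((2:ℝ) ^ (2 ^ (N - 1) : ℕ)) * Real.exp (-(K * (N:ℝ) ^ 4)))
        ≤ ∫⁻ ω, ENNReal.ofReal (|Y N N ω| ^ p) ∂ℙ := by
    intro N hN
    have hNpos : (0:ℝ) < N := by exact_mod_cast hN
    set h : ℝ := T / N with hhdef
    have hh : 0 < h := by positivity
    clear_value h
    set v : ℝ≥0 := Real.toNNReal h with hvdef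
    have hvr : (v:ℝ) = h := Real.coe_toNNReal h hh.le
    clear_value v
    have hv : v ≠ 0 := by
      intro hc
      rw [hc] at hvr
      simp at hvr
      linarith
    set r : ℝ := 3 * N / T + 2 with hrdef
    have hr2 : 2 ≤ r := by
      rw [hrdef]
      have : 0 ≤ 3 * (N:ℝ) / T := by positivity
      linarith
    have hr1 : (1:ℝ) ≤ r := by linarith
    clear_value r
    have hhr : 3 ≤ h * r := by
      have h1 : h * r = 3 + 2 * T / N := by
        rw [hhdef, hrdef]; field_simp
      have h2 : 0 ≤ 2 * T / (N:ℝ) := by positivity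
      rw [h1]
      linarith
    -- increments and events
    set D : Fin N → Ω → ℝ :=
      fun i => fun ω => W ((((i:ℕ):ℝ) + 1) * T / N) ω - W (((i:ℕ):ℝ) * T / N) ω with hDdef
    set B : Fin N → Set ℝ :=
      fun i => if (i:ℕ) = 0 then Set.Icc r (r + 1) else Set.Icc 0 1 with hBdef
    clear_value D B
    have hgrid : ∀ k : ℕ, k ≤ N → ((k:ℝ) * T / N) ∈ Set.Icc 0 T := by
      intro k hk
      constructor
      · positivity
      · rw [div_le_iff₀ hNpos]
        have : (k:ℝ) ≤ N := by exact_mod_cast hk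
        nlinarith
    have hDmeas : ∀ i : Fin N, Measurable (D i) := by
      intro i
      have h1 := hWmeas _ (hgrid (i+1) (by omega))
      have h2 := hWmeas _ (hgrid i i.2.le)
      have hcast : (((i:ℕ):ℝ) + 1) * T / N = (((i:ℕ) + 1 : ℕ):ℝ) * T / N := by push_cast; ring
      rw [hDdef]
      simp only [hcast]
      exact h1.sub h2
    have hBmeas : ∀ i : Fin N, MeasurableSet (B i) := by
      intro i
      have hBi : B i = if (i:ℕ) = 0 then Set.Icc r (r + 1) else Set.Icc 0 1 := by rw [hBdef]
      rw [hBi]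
      split_ifs <;> exact measurableSet_Icc
    set A : Set Ω := ⋂ i ∈ Finset.univ, D i ⁻¹' B i with hAdef
    clear_value A
    have hAmeas : MeasurableSet A := by
      rw [hAdef]
      apply MeasurableSet.biInter (Set.to_countable _)
      intro i _
      exact hDmeas i ((hBmeas i))
    have hAmem : ∀ ω ∈ A, ∀ i : Fin N, D i ω ∈ B i := by
      intro ω hω i
      rw [hAdef] at hω
      exact Set.mem_iInter₂.mp hω i (Finset.mem_univ i)
    -- pointwise growth on A
    have hgrow : ∀ ω ∈ A, (r:ℝ) ^ (2 ^ (N - 1) : ℕ) ≤ |Y N N ω| := by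
      intro ω hω
      have claim : ∀ k, 1 ≤ k → k ≤ N → r ^ (2 ^ (k - 1) : ℕ) ≤ |Y N k ω| := by
        intro k hk1
        induction k, hk1 using Nat.le_induction with
        | base =>
          intro _
          have h0N : 0 < N := hN
          have hrec := hYrec N hN 0 h0N ω
          rw [hY0 N hN ω] at hrec
          have hd : D ⟨0, h0N⟩ ω ∈ B ⟨0, h0N⟩ := hAmem ω hω ⟨0, h0N⟩
          have hB0 : B ⟨0, h0N⟩ = Set.Icc r (r + 1) := by rw [hBdef]; simp
          rw [hB0] at hd
          have hD0 : D ⟨0, h0N⟩ ω = W (((0:ℝ) + 1) * T / N) ω - W ((0:ℝ) * T / N) ω := by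
            rw [hDdef]; norm_num
          have hY1 : Y N 1 ω = D ⟨0, h0N⟩ ω := by
            rw [hD0]
            rw [show Y N 1 ω = _ from hrec]
            norm_num [hW0 ω]
          rw [hY1]
          have hdr : r ≤ D ⟨0, h0N⟩ ω := hd.1
          have hd0 : 0 ≤ D ⟨0, h0N⟩ ω := le_trans (by linarith) hdr
          have hexp : (2:ℕ) ^ (1 - 1) = 1 := rfl
          rw [hexp, pow_one, abs_of_nonneg hd0]
          exact hdr
        | succ k hk1 IH =>
          intro hkN
          have hkN' : k < N := hkN
          have IH' := IH hkN'.le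
          have hrec := hYrec N hN k hkN' ω
          have hd : D ⟨k, hkN'⟩ ω ∈ B ⟨k, hkN'⟩ := hAmem ω hω _
          have hBk : B ⟨k, hkN'⟩ = Set.Icc 0 1 := by
            rw [hBdef]
            simp only []
            rw [if_neg]
            omega
          rw [hBk] at hd
          have hdabs : |D ⟨k, hkN'⟩ ω| ≤ 1 := abs_le.mpr ⟨by linarith [hd.1], hd.2⟩
          have hr'ge : r ≤ r ^ (2 ^ (k - 1) : ℕ) :=
            le_self_pow₀ hr1 (by positivity)
          have hr'1 : (1:ℝ) ≤ r ^ (2 ^ (k - 1) : ℕ) := le_trans hr1 hr'ge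
          have hhr' : 3 ≤ h * r ^ (2 ^ (k - 1) : ℕ) :=
            le_trans hhr (mul_le_mul_of_nonneg_left hr'ge hh.le)
          have hYk : Y N (k + 1) ω = Y N k ω - h * (Y N k ω) ^ 3 + D ⟨k, hkN'⟩ ω := by
            rw [hrec, hDdef, hhdef]
          have hgr := my_growth hr'1 hhr' IH' hdabs
          rw [← hYk] at hgr
          have hpow : r ^ (2 ^ ((k + 1) - 1) : ℕ) = (r ^ (2 ^ (k - 1) : ℕ)) ^ 2 := by
            rw [← pow_mul]
            congr 1
            have h1 : (k + 1) - 1 = (k - 1) + 1 := by omega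
            rw [h1, pow_succ]
          rw [hpow]
          calc (r ^ (2 ^ (k - 1) : ℕ)) ^ 2 ≤ |Y N k ω| ^ 2 :=
                pow_le_pow_left₀ (le_trans zero_le_one hr'1) IH' 2
            _ ≤ |Y N (k + 1) ω| := hgr
      exact claim N hN le_rfl
    -- probability lower bound
    set m : ℝ := C * Real.exp (-(r + 1) ^ 2 / (2 * h)) with hmdef
    have hmpos : 0 < m := by positivity
    clear_value m
    have hprob : ENNReal.ofReal (m ^ N) ≤ ℙ A := by
      have hmono : Monotone (fun i : Fin (N + 1) => ((i:ℕ):ℝ) * T / N) := by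
        intro i j hij
        dsimp only
        have hij' : ((i:ℕ):ℝ) ≤ ((j:ℕ):ℝ) := by exact_mod_cast hij
        gcongr
      have hmem : ∀ i : Fin (N + 1), ((i:ℕ):ℝ) * T / N ∈ Set.Icc 0 T :=
        fun i => hgrid i (by omega)
      have hind := hWindep N (fun i : Fin (N + 1) => ((i:ℕ):ℝ) * T / N) hmono hmem
      have hDeq : (fun (i : Fin N) => fun ω =>
          W ((fun i : Fin (N + 1) => ((i:ℕ):ℝ) * T / N) i.succ) ω
            - W ((fun i : Fin (N + 1) => ((i:ℕ):ℝ) * T / N) i.castSucc) ω) = D := by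
        rw [hDdef]
        funext i ω
        simp only [Fin.val_succ, Fin.coe_castSucc]
        push_cast
        ring_nf
      rw [hDeq] at hind
      have hAeq := hind.measure_inter_preimage_eq_mul (S := Finset.univ) (sets := B)
        (fun i _ => hBmeas i)
      rw [hAdef, hAeq]
      have hfac : ∀ i : Fin N, ENNReal.ofReal m ≤ ℙ (D i ⁻¹' B i) := by
        intro i
        have hDi : D i = fun ω => W ((((i:ℕ):ℝ) + 1) * T / N) ω - W (((i:ℕ):ℝ) * T / N) ω := by
          rw [hDdef]
        have hvar : ((((i:ℕ):ℝ) + 1) * T / N - ((i:ℕ):ℝ) * T / N) = h := by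
          rw [hhdef]; ring
        have hgT : ((((i:ℕ):ℝ) + 1) * T / N) ≤ T := by
          have h2 := (hgrid ((i:ℕ) + 1) (by omega)).2
          push_cast at h2
          exact h2
        have hst : (((i:ℕ):ℝ)) * T / N ≤ (((i:ℕ):ℝ) + 1) * T / N := by
          have h0 : (0:ℝ) ≤ T / N := by positivity
          rw [mul_div_assoc, mul_div_assoc]
          have hii : ((i:ℕ):ℝ) ≤ ((i:ℕ):ℝ) + 1 := by linarith
          exact mul_le_mul_of_nonneg_right hii h0
        have hg := hWgauss (((i:ℕ):ℝ) * T / N) ((((i:ℕ):ℝ) + 1) * T / N)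
          (hgrid i (le_of_lt i.2)).1 hst hgT
        rw [hvar, ← hvdef] at hg
        have hmap : ℙ (D i ⁻¹' B i) = gaussianReal 0 v (B i) := by
          rw [← Measure.map_apply (hDmeas i) (hBmeas i), hDi, hg]
        rw [hmap]
        by_cases hi : (i:ℕ) = 0
        · have hBi : B i = Set.Icc r (r + 1) := by rw [hBdef]; simp only []; rw [if_pos hi]
          rw [hBi]
          refine le_trans ?_ (my_gauss_icc_lb v hv r (r + 1) (by linarith) (by linarith))
          apply ENNReal.ofReal_le_ofReal
          have hvT : (v:ℝ) ≤ T := by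
            rw [hvr, hhdef]
            have hN1 : (1:ℝ) ≤ N := by exact_mod_cast hN
            calc T / (N:ℝ) ≤ T / 1 := by gcongr
              _ = T := div_one T
          have hpdf := my_pdf_lb v T hvT (by rw [hvr]; exact hh) (r + 1)
          have h2v : (2:ℝ) * v = 2 * h := by rw [hvr]
          rw [h2v] at hpdf
          rw [hmdef, hC]
          calc (√(2 * Real.pi * T))⁻¹ * Real.exp (-(r + 1) ^ 2 / (2 * h))
              ≤ gaussianPDFReal 0 v (r + 1) := hpdf
            _ = (r + 1 - r) * gaussianPDFReal 0 v (r + 1) := by ring_nf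
        · have hBi : B i = Set.Icc 0 1 := by rw [hBdef]; simp only []; rw [if_neg hi]
          rw [hBi]
          refine le_trans ?_ (my_gauss_icc_lb v hv 0 1 le_rfl zero_le_one)
          apply ENNReal.ofReal_le_ofReal
          have hvT : (v:ℝ) ≤ T := by
            rw [hvr, hhdef]
            have hN1 : (1:ℝ) ≤ N := by exact_mod_cast hN
            calc T / (N:ℝ) ≤ T / 1 := by gcongr
              _ = T := div_one T
          have hpdf := my_pdf_lb v T hvT (by rw [hvr]; exact hh) 1
          have h2v : (2:ℝ) * v = 2 * h := by rw [hvr]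
          rw [h2v] at hpdf
          rw [hmdef, hC]
          have hexple : Real.exp (-(r + 1) ^ 2 / (2 * h)) ≤ Real.exp (-(1:ℝ) ^ 2 / (2 * h)) := by
            apply Real.exp_le_exp.mpr
            exact div_le_div_of_nonneg_right (by nlinarith) (by linarith)
          calc (√(2 * Real.pi * T))⁻¹ * Real.exp (-(r + 1) ^ 2 / (2 * h))
              ≤ (√(2 * Real.pi * T))⁻¹ * Real.exp (-(1:ℝ) ^ 2 / (2 * h)) := by
                apply mul_le_mul_of_nonneg_left hexple (by positivity)
            _ ≤ gaussianPDFReal 0 v 1 := hpdf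
            _ = (1 - 0) * gaussianPDFReal 0 v 1 := by ring_nf
      calc ENNReal.ofReal (m ^ N) = (ENNReal.ofReal m) ^ N := ENNReal.ofReal_pow hmpos.le N
        _ = ∏ _i : Fin N, ENNReal.ofReal m := by
            rw [Finset.prod_const, Finset.card_univ, Fintype.card_fin]
        _ ≤ ∏ i : Fin N, ℙ (D i ⁻¹' B i) := Finset.prod_le_prod' (fun i _ => hfac i)
    -- lintegral lower bound
    have hlint : ENNReal.ofReal ((2:ℝ) ^ (2 ^ (N - 1) : ℕ)) * ℙ A
        ≤ ∫⁻ ω, ENNReal.ofReal (|Y N N ω| ^ p) ∂ℙ := by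
      have hpt : ∀ ω, A.indicator (fun _ => ENNReal.ofReal ((2:ℝ) ^ (2 ^ (N - 1) : ℕ))) ω
          ≤ ENNReal.ofReal (|Y N N ω| ^ p) := by
        intro ω
        by_cases hω : ω ∈ A
        · rw [Set.indicator_of_mem hω]
          apply ENNReal.ofReal_le_ofReal
          have h1 := hgrow ω hω
          have h2 : (2:ℝ) ^ (2 ^ (N - 1) : ℕ) ≤ r ^ (2 ^ (N - 1) : ℕ) :=
            pow_le_pow_left₀ (by norm_num) hr2 _
          have h12 : (1:ℝ) ≤ (2:ℝ) ^ (2 ^ (N - 1) : ℕ) := one_le_pow₀ (by norm_num)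
          have h3 : (1:ℝ) ≤ |Y N N ω| := h12.trans (h2.trans h1)
          calc (2:ℝ) ^ (2 ^ (N - 1) : ℕ) ≤ |Y N N ω| := h2.trans h1
            _ = |Y N N ω| ^ (1:ℝ) := (Real.rpow_one _).symm
            _ ≤ |Y N N ω| ^ p := Real.rpow_le_rpow_of_exponent_le h3 hp
        · rw [Set.indicator_of_notMem hω]; exact zero_le
      calc ENNReal.ofReal ((2:ℝ) ^ (2 ^ (N - 1) : ℕ)) * ℙ A
          = ∫⁻ ω, A.indicator (fun _ => ENNReal.ofReal ((2:ℝ) ^ (2 ^ (N - 1) : ℕ))) ω ∂ℙ := by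
            rw [lintegral_indicator_const hAmeas]
        _ ≤ _ := lintegral_mono hpt
    -- combine
    have hfinal : ((2:ℝ) ^ (2 ^ (N - 1) : ℕ)) * Real.exp (-(K * (N:ℝ) ^ 4))
        ≤ ((2:ℝ) ^ (2 ^ (N - 1) : ℕ)) * m ^ N := by
      apply mul_le_mul_of_nonneg_left _ (by positivity)
      have hmN : m ^ N = Real.exp ((N:ℝ) * Real.log C + (N:ℝ) * (-(r + 1) ^ 2 / (2 * h))) := by
        have hCN : C ^ N = Real.exp ((N:ℝ) * Real.log C) := by
          rw [Real.exp_nat_mul, Real.exp_log hCpos]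
        have hEN : (Real.exp (-(r + 1) ^ 2 / (2 * h))) ^ N
            = Real.exp ((N:ℝ) * (-(r + 1) ^ 2 / (2 * h))) := by
          rw [Real.exp_nat_mul]
        rw [hmdef, mul_pow, hCN, hEN, ← Real.exp_add]
      rw [hmN]
      apply Real.exp_le_exp.mpr
      have hN1 : (1:ℝ) ≤ N := by exact_mod_cast hN
      have e1 : (N:ℝ) * ((r + 1) ^ 2 / (2 * h)) = (r + 1) ^ 2 * (N:ℝ) ^ 2 / (2 * T) := by
        rw [hhdef]; field_simp
      have e2 : r + 1 ≤ (3 / T + 3) * N := by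
        rw [hrdef]
        have h3 : 3 * (N:ℝ) / T = 3 / T * N := by ring
        rw [h3]
        nlinarith
      have hr1' : (0:ℝ) ≤ r + 1 := by linarith
      have e3 : (r + 1) ^ 2 ≤ (3 / T + 3) ^ 2 * (N:ℝ) ^ 2 := by
        calc (r + 1) ^ 2 ≤ ((3 / T + 3) * N) ^ 2 := pow_le_pow_left₀ hr1' e2 2
          _ = (3 / T + 3) ^ 2 * (N:ℝ) ^ 2 := by rw [mul_pow]
      have e4 : (N:ℝ) * ((r + 1) ^ 2 / (2 * h)) ≤ (3 / T + 3) ^ 2 / (2 * T) * (N:ℝ) ^ 4 := by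
        rw [e1]
        rw [div_le_iff₀ (by positivity : (0:ℝ) < 2 * T)]
        have : (3 / T + 3) ^ 2 / (2 * T) * (N:ℝ) ^ 4 * (2 * T)
            = (3 / T + 3) ^ 2 * (N:ℝ) ^ 2 * (N:ℝ) ^ 2 := by field_simp
        rw [this]
        nlinarith [sq_nonneg ((N:ℝ) - 1), sq_nonneg (N:ℝ)]
      have e5 : -((N:ℝ) * Real.log C) ≤ |Real.log C| * (N:ℝ) ^ 4 := by
        have h1 : -Real.log C ≤ |Real.log C| := neg_le_abs _
        have h2 : (N:ℝ) ≤ (N:ℝ) ^ 4 := le_self_pow₀ hN1 (by norm_num)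
        have h3 : -((N:ℝ) * Real.log C) = (N:ℝ) * (-Real.log C) := by ring
        rw [h3]
        calc (N:ℝ) * (-Real.log C) ≤ (N:ℝ) * |Real.log C| :=
              mul_le_mul_of_nonneg_left h1 (by linarith)
          _ ≤ (N:ℝ) ^ 4 * |Real.log C| :=
              mul_le_mul_of_nonneg_right h2 (abs_nonneg _)
          _ = |Real.log C| * (N:ℝ) ^ 4 := by ring
      rw [hKdef]
      have goal1 : (N:ℝ) * (-(r + 1) ^ 2 / (2 * h)) = -((N:ℝ) * ((r + 1) ^ 2 / (2 * h))) := by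
        ring
      rw [goal1]
      nlinarith [e4, e5]
    calc ENNReal.ofReal (((2:ℝ) ^ (2 ^ (N - 1) : ℕ)) * Real.exp (-(K * (N:ℝ) ^ 4)))
        ≤ ENNReal.ofReal (((2:ℝ) ^ (2 ^ (N - 1) : ℕ)) * m ^ N) :=
          ENNReal.ofReal_le_ofReal hfinal
      _ = ENNReal.ofReal ((2:ℝ) ^ (2 ^ (N - 1) : ℕ)) * ENNReal.ofReal (m ^ N) :=
          ENNReal.ofReal_mul (by positivity)
      _ ≤ ENNReal.ofReal ((2:ℝ) ^ (2 ^ (N - 1) : ℕ)) * ℙ A := by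
          exact mul_le_mul_right hprob _
      _ ≤ _ := hlint
  have htop : Tendsto (fun N : ℕ =>
      ENNReal.ofReal (((2:ℝ) ^ (2 ^ (N - 1) : ℕ)) * Real.exp (-(K * (N:ℝ) ^ 4))))
      atTop (nhds ⊤) :=
    ENNReal.tendsto_ofReal_atTop.comp (my_tendsto K)
  refine tendsto_nhds_top_mono htop ?_
  filter_upwards [eventually_ge_atTop 1] with N hN using main N hN
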